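/- Let f(y) = Σ_{j=0}^d a_j y^j have integer coefficients with d ≥ 2, a_d ≥ 1, gcd(a_0,…,a_d) = 1, and suppose f is non-constant as a function modulo p for every prime p, so that by Lemma 6 there is δ_f ∈ (0,1) with |S(q',a',f)| ≤ (1−δ_f)q' for all q' > 1 and gcd(a',q') = 1. Then for every integer q > 1 and every a ∈ ℤ with gcd(a,q) = 1: Σ_{j=1}^∞ |S(q_j, ã_j, f)| / (j^{(d+1)/d} q_j) ≤ (1 − δ_f + δ_f · q^{−1−1/d}) · ζ(1 + 1/d) < (1 − δ_f/2) · ζ(1 + 1/d), where q_j := q/gcd(q,j), ã_j := a·j/gcd(q,j), and ζ is the Riemann zeta function. -/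

import Mathlib

/-- `f(y) = ∑_{j=0}^d a_j y^j` as a function on `ℤ`. -/
noncomputable def fZ (d : ℕ) (a : ℕ → ℤ) (y : ℤ) : ℤ :=
  ∑ j ∈ Finset.range (d + 1), a j * y ^ j

/-- `e(θ) = exp(2πiθ)`. -/
noncomputable def eC (θ : ℝ) : ℂ := Complex.exp (((2 * Real.pi * θ : ℝ) : ℂ) * Complex.I)

/-- `S(q, c, b, f) = ∑_{y=1}^q e((c f(y) + b y)/q)`. -/
noncomputable def SExp (d : ℕ) (a : ℕ → ℤ) (q : ℕ) (c b : ℤ) : ℂ :=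
  ∑ y ∈ Finset.Icc 1 q, eC (((c * fZ d a (y : ℤ) + b * (y : ℤ) : ℤ) : ℝ) / (q : ℝ))

/-- The Riemann zeta function at a real argument `s > 1`, as the series `∑_{n≥1} n^{-s}`. -/
noncomputable def zetaR (s : ℝ) : ℝ := ∑' n : ℕ, ((n : ℝ) + 1) ^ (-s)

lemma norm_eC (θ : ℝ) : ‖eC θ‖ = 1 := by
  simp [eC, Complex.norm_exp]

lemma norm_SExp_one (d : ℕ) (a : ℕ → ℤ) (c b : ℤ) : ‖SExp d a 1 c b‖ = 1 := by
  rw [SExp, show Finset.Icc 1 1 = {1} from rfl, Finset.sum_singleton, norm_eC]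

lemma summable_shift (s : ℝ) (hs : 1 < s) : Summable (fun n : ℕ => ((n:ℝ)+1) ^ (-s)) := by
  have h := Real.summable_nat_rpow.mpr (show -s < -1 by linarith)
  have h2 := (summable_nat_add_iff 1).mpr h
  simpa using h2

lemma tsum_multiples (q : ℕ) (hq : 1 < q) (s : ℝ) :
    ∑' j : ℕ, (if q ∣ (j+1) then ((j:ℝ)+1)^(-s) else 0) = (q:ℝ)^(-s) * zetaR s := by
  set h : ℕ → ℝ := fun j => if q ∣ (j+1) then ((j:ℝ)+1)^(-s) else 0 with hdef
  set i : ℕ → ℕ := fun m => q * m + (q - 1) with idef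
  have hinj : Function.Injective i := by
    intro m1 m2 hm
    simp only [idef] at hm
    have : q * m1 = q * m2 := by omega
    exact Nat.eq_of_mul_eq_mul_left (by omega) this
  have hsupp : Function.support h ⊆ Set.range i := by
    intro y hy
    have hdvd : q ∣ y + 1 := by
      by_contra hc; simp [hdef, hc] at hy
    obtain ⟨k, hk⟩ := hdvd
    have hk1 : 1 ≤ k := by
      rcases k with _ | k
      · simp at hk
      · omega
    obtain ⟨k', rfl⟩ : ∃ k', k = k' + 1 := ⟨k - 1, by omega⟩
    have hmul : q * (k' + 1) = q * k' + q := by ring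
    exact ⟨k', by simp only [idef]; omega⟩
  have key := hinj.tsum_eq hsupp
  rw [← key]
  have : ∀ m : ℕ, h (i m) = (q:ℝ)^(-s) * ((m:ℝ)+1)^(-s) := by
    intro m
    have hdvd : q ∣ i m + 1 := ⟨m + 1, by
      have hmul : q * (m + 1) = q * m + q := by ring
      simp only [idef]; omega⟩
    have hcast : ((i m : ℝ) + 1) = (q:ℝ) * ((m:ℝ)+1) := by
      simp only [idef]; push_cast [Nat.cast_sub (by omega : 1 ≤ q)]; ring
    simp only [hdef, if_pos hdvd, hcast]
    rw [Real.mul_rpow (by positivity) (by positivity)]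
  rw [tsum_congr this, tsum_mul_left]
  rfl

lemma copr (q : ℕ) (hq : 0 < q) (aa : ℤ) (haq : Int.gcd aa (q:ℤ) = 1) (n : ℕ) :
    Int.gcd ((aa * (n:ℤ)) / (Nat.gcd q n : ℤ)) ((q / Nat.gcd q n : ℕ) : ℤ) = 1 := by
  set g := Nat.gcd q n with hgdef
  have hg : 0 < g := Nat.gcd_pos_of_pos_left n hq
  have hgn : g ∣ n := Nat.gcd_dvd_right q n
  have h1 : (aa * (n:ℤ)) / (g:ℤ) = aa * ((n / g : ℕ) : ℤ) := by
    rw [Int.mul_ediv_assoc aa (Int.natCast_dvd_natCast.mpr hgn)]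
    norm_cast
  rw [h1, ← Int.isCoprime_iff_gcd_eq_one]
  apply IsCoprime.mul_left
  · rw [Int.isCoprime_iff_gcd_eq_one]
    have haq' : Nat.Coprime aa.natAbs q := haq
    have : Nat.Coprime aa.natAbs (q / g) :=
      Nat.Coprime.coprime_dvd_right (Nat.div_dvd_of_dvd (Nat.gcd_dvd_left q n)) haq'
    exact this
  · rw [Int.isCoprime_iff_gcd_eq_one]
    have := (Nat.coprime_div_gcd_div_gcd (m := q) (n := n) hg).symm
    exact this

theorem stmt12 (d : ℕ) (hd : 2 ≤ d) (a : ℕ → ℤ) (had : 1 ≤ a d)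
    (hgcd : Finset.gcd (Finset.range (d + 1)) a = 1)
    (hmod : ∀ p : ℕ, p.Prime →
      ∃ y₁ y₂ : ℤ, ¬ ((p : ℤ) ∣ (fZ d a y₁ - fZ d a y₂)))
    (δ : ℝ) (hδ0 : 0 < δ) (hδ1 : δ < 1)
    (hS : ∀ q' : ℕ, 1 < q' → ∀ a' : ℤ, Int.gcd a' (q' : ℤ) = 1 →
      ‖SExp d a q' a' 0‖ ≤ (1 - δ) * (q' : ℝ))
    (q : ℕ) (hq : 1 < q) (aa : ℤ) (haq : Int.gcd aa (q : ℤ) = 1) :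
    (∑' j : ℕ, ‖SExp d a (q / Nat.gcd q (j + 1))
          ((aa * ((j : ℤ) + 1)) / (Nat.gcd q (j + 1) : ℤ)) 0‖ /
        (((j : ℝ) + 1) ^ (((d : ℝ) + 1) / (d : ℝ)) * ((q / Nat.gcd q (j + 1) : ℕ) : ℝ)))
      ≤ (1 - δ + δ * (q : ℝ) ^ (-(1 + 1 / (d : ℝ)))) * zetaR (1 + 1 / (d : ℝ)) ∧
    (1 - δ + δ * (q : ℝ) ^ (-(1 + 1 / (d : ℝ)))) * zetaR (1 + 1 / (d : ℝ))
      < (1 - δ / 2) * zetaR (1 + 1 / (d : ℝ)) := by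
  have hdpos : 0 < d := by omega
  have hdR : (0:ℝ) < (d:ℝ) := by exact_mod_cast hdpos
  have ht : (1:ℝ) + 1/(d:ℝ) = ((d:ℝ)+1)/(d:ℝ) := by field_simp
  rw [ht]
  set t : ℝ := ((d:ℝ)+1)/(d:ℝ) with htdef
  have ht1 : 1 < t := by
    rw [htdef, lt_div_iff₀ hdR]; linarith
  have hq0 : 0 < q := by omega
  set F : ℕ → ℝ := fun j => ‖SExp d a (q / Nat.gcd q (j + 1))
          ((aa * ((j : ℤ) + 1)) / (Nat.gcd q (j + 1) : ℤ)) 0‖ /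
        (((j : ℝ) + 1) ^ t * ((q / Nat.gcd q (j + 1) : ℕ) : ℝ)) with hFdef
  set G : ℕ → ℝ := fun j => (1-δ)*((j:ℝ)+1)^(-t)
      + (if q ∣ (j+1) then δ*((j:ℝ)+1)^(-t) else 0) with hGdef
  have hF0 : ∀ j, 0 ≤ F j := fun j => by
    apply div_nonneg (norm_nonneg _)
    positivity
  have hFG : ∀ j, F j ≤ G j := by
    intro j
    set n := j + 1 with hndef
    set g := Nat.gcd q n with hgdef
    have hgpos : 0 < g := Nat.gcd_pos_of_pos_left n hq0
    have hgq : g ∣ q := Nat.gcd_dvd_left q n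
    have hgn : g ∣ n := Nat.gcd_dvd_right q n
    have hA : (0:ℝ) < ((j:ℝ)+1)^t := by positivity
    by_cases hdvd : q ∣ n
    · have hgeq : g = q := by rw [hgdef]; exact Nat.gcd_eq_left hdvd
      have hq1 : q / g = 1 := by rw [hgeq, Nat.div_self hq0]
      have hFj : F j = ((j:ℝ)+1)^(-t) := by
        rw [hFdef]
        simp only
        rw [hq1, norm_SExp_one, Real.rpow_neg (by positivity : (0:ℝ) ≤ (j:ℝ)+1)]
        push_cast
        field_simp
      rw [hFj, hGdef]
      simp only [if_pos (show q ∣ j + 1 from hdvd)]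
      nlinarith [Real.rpow_pos_of_pos (show (0:ℝ) < (j:ℝ)+1 by positivity) (-t)]
    · have hqdiv : g * (q / g) = q := Nat.mul_div_cancel' hgq
      have hqg1 : 1 < q / g := by
        have hne : q / g ≠ 0 := by
          intro h0; rw [h0, Nat.mul_zero] at hqdiv; omega
        have hne1 : q / g ≠ 1 := by
          intro h1; rw [h1, Nat.mul_one] at hqdiv
          exact hdvd (hqdiv ▸ hgn)
        rcases hE : q / g with _ | m
        · exact absurd hE hne
        · rcases m with _ | m
          · exact absurd hE hne1
          · omega
      have hcop := copr q hq0 aa haq n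
      have hzcast : aa * ((j:ℤ)+1) = aa * (n:ℤ) := by rw [hndef]; push_cast; ring
      have hbound : ‖SExp d a (q / g) ((aa * ((j:ℤ)+1)) / (g:ℤ)) 0‖
          ≤ (1 - δ) * ((q / g : ℕ) : ℝ) := by
        rw [hzcast]
        exact hS (q / g) hqg1 _ hcop
      have hqgR : (0:ℝ) < ((q / g : ℕ) : ℝ) := by
        exact_mod_cast Nat.lt_trans Nat.zero_lt_one hqg1
      have step1 : F j ≤ ((1-δ) * ((q / g : ℕ):ℝ)) / (((j:ℝ)+1)^t * ((q / g : ℕ):ℝ)) := by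
        have hFj : F j = ‖SExp d a (q / g) ((aa * ((j:ℤ)+1)) / (g:ℤ)) 0‖ /
            (((j:ℝ)+1)^t * ((q / g : ℕ):ℝ)) := rfl
        rw [hFj]
        gcongr
      have step2 : ((1-δ) * ((q / g : ℕ):ℝ)) / (((j:ℝ)+1)^t * ((q / g : ℕ):ℝ))
          = (1-δ) * ((j:ℝ)+1)^(-t) := by
        rw [Real.rpow_neg (by positivity : (0:ℝ) ≤ (j:ℝ)+1)]
        field_simp
      have step3 : (1-δ) * ((j:ℝ)+1)^(-t) ≤ G j := by
        rw [hGdef]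
        simp only [if_neg (show ¬ q ∣ j + 1 from hdvd)]
        have hnn : (0:ℝ) ≤ δ*((j:ℝ)+1)^(-t) := by positivity
        linarith
      exact step1.trans (step2 ▸ step3)
  have hsum0 : Summable (fun j : ℕ => ((j:ℝ)+1)^(-t)) := summable_shift t ht1
  have hG1 : Summable (fun j : ℕ => (1-δ)*((j:ℝ)+1)^(-t)) := hsum0.mul_left _
  have hG2 : Summable (fun j : ℕ => if q ∣ (j+1) then δ*((j:ℝ)+1)^(-t) else 0) := by
    refine Summable.of_nonneg_of_le (fun j => ?_) (fun j => ?_) (hsum0.mul_left δ)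
    · split <;> positivity
    · split
      · exact le_refl _
      · positivity
  have hG : Summable G := hG1.add hG2
  have hF : Summable F := Summable.of_nonneg_of_le hF0 hFG hG
  have h1 : (∑' j, F j) ≤ ∑' j, G j := Summable.tsum_le_tsum hFG hF hG
  have h2 : ∑' j, G j = (1 - δ + δ * (q:ℝ)^(-t)) * zetaR t := by
    rw [hGdef, Summable.tsum_add hG1 hG2, tsum_mul_left]
    have hre : (fun j : ℕ => if q ∣ (j+1) then δ*((j:ℝ)+1)^(-t) else 0)
         = fun j : ℕ => δ * (if q ∣ (j+1) then ((j:ℝ)+1)^(-t) else 0) := by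
      funext j; split <;> simp
    rw [hre, tsum_mul_left, tsum_multiples q hq t]
    have hz : zetaR t = ∑' j : ℕ, ((j:ℝ)+1)^(-t) := rfl
    rw [← hz]; ring
  have hzeta : 0 < zetaR t := by
    have : (0:ℝ) < ((0:ℕ):ℝ) + 1 := by norm_num
    exact Summable.tsum_pos hsum0 (fun i => by positivity) 0 (by positivity)
  constructor
  · exact h2 ▸ h1
  · apply mul_lt_mul_of_pos_right _ hzeta
    have hq2 : (2:ℝ) ≤ (q:ℝ) := by exact_mod_cast hq
    have h3 : (2:ℝ) < (q:ℝ)^t := by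
      have := Real.rpow_lt_rpow_of_exponent_lt (show 1 < (q:ℝ) by linarith) ht1
      rw [Real.rpow_one] at this
      linarith
    have h4 : (q:ℝ)^(-t) < 1/2 := by
      rw [Real.rpow_neg (by positivity : (0:ℝ) ≤ (q:ℝ)), show (1:ℝ)/2 = (2:ℝ)⁻¹ by norm_num]
      exact inv_strictAnti₀ (by norm_num) h3
    nlinarith
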